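/- Let O be a nonempty set of outcomes and u_1,...,u_n : O → ℝ≥0 utility functions. If an outcome o is proportionally fair (i.e., for all o' ∈ O, (1/n)·∑_i u_i(o')/u_i(o) ≤ 1, where in particular u_i(o) > 0 for all i), then o maximizes Nash welfare, i.e., ∏_i u_i(o') ≤ ∏_i u_i(o) for all o' ∈ O. -/

import Mathlib

theorem pf_implies_mnw {O : Type*} [Nonempty O] {n : ℕ} (hn : 0 < n)
    (u : Fin n → O → ℝ) (hu : ∀ i o, 0 ≤ u i o)
    (o : O) (hpos : ∀ i, 0 < u i o)
    (hPF : ∀ o' : O, (1 / (n : ℝ)) * ∑ i, u i o' / u i o ≤ 1) :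
    ∀ o' : O, ∏ i, u i o' ≤ ∏ i, u i o := by
  intro o'
  have hn' : (0 : ℝ) < n := by exact_mod_cast hn
  set z : Fin n → ℝ := fun i => u i o' / u i o with hz
  have hznn : ∀ i ∈ Finset.univ, (0 : ℝ) ≤ z i := fun i _ =>
    div_nonneg (hu i o') (hpos i).le
  have hwnn : ∀ i ∈ (Finset.univ : Finset (Fin n)), (0 : ℝ) ≤ 1 / n :=
    fun i _ => by positivity
  have hwsum : ∑ _i : Fin n, (1 / (n : ℝ)) = 1 := by
    simp [Finset.card_univ]
    field_simp
  have hamgm := Real.geom_mean_le_arith_mean_weighted Finset.univ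
    (fun _ => 1 / n) z hwnn hwsum hznn
  have h1 : ∑ i, (1 / (n : ℝ)) * z i ≤ 1 := by
    have := hPF o'
    rwa [Finset.mul_sum] at this
  have hprod1 : ∏ i, z i ^ (1 / (n : ℝ)) ≤ 1 := hamgm.trans h1
  have hprodz : ∏ i, z i ≤ 1 := by
    have hpow : (∏ i, z i ^ (1 / (n : ℝ))) = (∏ i, z i) ^ (1 / (n : ℝ)) := by
      rw [← Real.finset_prod_rpow _ _ hznn]
    rw [hpow] at hprod1
    have hpnn : 0 ≤ ∏ i, z i := Finset.prod_nonneg hznn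
    by_contra h
    push_neg at h
    have : (1 : ℝ) < (∏ i, z i) ^ (1 / (n : ℝ)) :=
      Real.one_lt_rpow_iff_of_pos (by linarith) |>.mpr (Or.inl ⟨h, by positivity⟩)
    linarith
  have hpo : 0 < ∏ i, u i o := Finset.prod_pos fun i _ => hpos i
  have : (∏ i, z i) * ∏ i, u i o ≤ ∏ i, u i o := by
    nlinarith
  calc ∏ i, u i o' = (∏ i, z i) * ∏ i, u i o := by
        rw [← Finset.prod_mul_distrib]
        refine Finset.prod_congr rfl fun i _ => ?_
        field_simp [hz, (hpos i).ne']
        exact (div_mul_cancel₀ (u i o') (hpos i).ne').symm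
    _ ≤ ∏ i, u i o := this
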